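/- Let h : ℤ → ℤ≥0 be nonzero with h(j) = 0 for j ≪ 0, k₀ = min{j : h(j) > 0}, h₀ = h(k₀), h₁ = h(k₀+1). Then qdepth(h) = k₀ if and only if h₀ > h₁. -/
import Mathlib


/-- `β_k^d(h) = Σ_{j ≤ k} (-1)^{k-j} C(d-j, k-j) h(j)` (a finite sum when `h`
vanishes for `j ≪ 0`). -/
noncomputable def beta (h : ℤ → ℤ) (d k : ℤ) : ℤ :=
  ∑ᶠ j ∈ Set.Iic k, (-1 : ℤ) ^ (k - j).toNat * ((d - j).toNat.choose (k - j).toNat : ℤ) * h j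

/-- The set of `d` such that `β_k^d(h) ≥ 0` for all `k ≤ d`; its maximum is `qdepth h`. -/
def qdepthSet (h : ℤ → ℤ) : Set ℤ := {d : ℤ | ∀ k ≤ d, 0 ≤ beta h d k}

lemma beta_eq_sum (h : ℤ → ℤ) (k₀ : ℤ) (h0 : ∀ j < k₀, h j = 0) (d k : ℤ) :
    beta h d k = ∑ j ∈ Finset.Icc k₀ k,
      (-1 : ℤ) ^ (k - j).toNat * ((d - j).toNat.choose (k - j).toNat : ℤ) * h j := by
  apply finsum_mem_eq_sum_of_inter_support_eq
  ext j
  simp only [Set.mem_inter_iff, Function.mem_support, Finset.coe_Icc, Set.mem_Icc, Set.mem_Iic]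
  constructor
  · rintro ⟨hj, hne⟩
    refine ⟨⟨?_, hj⟩, hne⟩
    by_contra hlt
    push_neg at hlt
    exact hne (by simp [h0 j hlt])
  · rintro ⟨⟨_, hj⟩, hne⟩; exact ⟨hj, hne⟩

lemma beta_lt (h : ℤ → ℤ) (k₀ : ℤ) (h0 : ∀ j < k₀, h j = 0) (d k : ℤ) (hk : k < k₀) :
    beta h d k = 0 := by
  rw [beta_eq_sum h k₀ h0, Finset.Icc_eq_empty (by omega), Finset.sum_empty]

lemma beta_at (h : ℤ → ℤ) (k₀ : ℤ) (h0 : ∀ j < k₀, h j = 0) (d : ℤ) :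
    beta h d k₀ = h k₀ := by
  rw [beta_eq_sum h k₀ h0, Finset.Icc_self, Finset.sum_singleton]
  simp

lemma beta_succ (h : ℤ → ℤ) (k₀ : ℤ) (h0 : ∀ j < k₀, h j = 0) (d : ℤ) :
    beta h d (k₀ + 1) = h (k₀ + 1) - ((d - k₀).toNat : ℤ) * h k₀ := by
  rw [beta_eq_sum h k₀ h0]
  have hpair : Finset.Icc k₀ (k₀ + 1) = {k₀, k₀ + 1} := by
    ext x; simp only [Finset.mem_Icc, Finset.mem_insert, Finset.mem_singleton]; omega
  rw [hpair, Finset.sum_pair (by omega)]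
  have h1 : (k₀ + 1 - k₀).toNat = 1 := by omega
  have h2 : (k₀ + 1 - (k₀ + 1)).toNat = 0 := by omega
  have h3 : d - k₀ = d - (k₀ + 1) + 1 := by ring
  rw [h1, h2]
  simp only [pow_one, pow_zero, Nat.choose_one_right, Nat.choose_zero_right, Nat.cast_one,
    one_mul]
  ring

theorem qdepth_eq_k0_iff (h : ℤ → ℤ) (hne : h ≠ 0) (hnn : ∀ j, 0 ≤ h j)
    (hvan : ∃ N : ℤ, ∀ j < N, h j = 0)
    (k₀ : ℤ) (hk0 : IsLeast {j : ℤ | 0 < h j} k₀)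
    (d : ℤ) (hd : IsGreatest (qdepthSet h) d) :
    d = k₀ ↔ h (k₀ + 1) < h k₀ := by
  have h0 : ∀ j < k₀, h j = 0 := by
    intro j hj
    rcases lt_or_eq_of_le (hnn j) with hpos | hz
    · exact absurd (hk0.2 hpos) (by omega)
    · exact hz.symm
  have hk0pos : 0 < h k₀ := hk0.1
  have hk0mem : k₀ ∈ qdepthSet h := by
    intro k hk
    rcases lt_or_eq_of_le hk with hlt | heq
    · rw [beta_lt h k₀ h0 _ _ hlt]
    · rw [heq, beta_at h k₀ h0]; exact hnn k₀
  have hdk : k₀ ≤ d := hd.2 hk0mem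
  constructor
  · intro hdeq
    by_contra hge
    push_neg at hge
    have hmem : k₀ + 1 ∈ qdepthSet h := by
      intro k hk
      rcases lt_trichotomy k k₀ with hlt | heq | hgt
      · rw [beta_lt h k₀ h0 _ _ hlt]
      · rw [heq, beta_at h k₀ h0]; exact hnn k₀
      · have : k = k₀ + 1 := by omega
        subst this
        rw [beta_succ h k₀ h0]
        have : (k₀ + 1 - k₀).toNat = 1 := by omega
        rw [this]
        simp
        omega
    have := hd.2 hmem
    omega
  · intro hlt
    by_contra hne'
    have hgt : k₀ + 1 ≤ d := by omega
    have := hd.1 (k₀ + 1) (by omega)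
    rw [beta_succ h k₀ h0] at this
    have hn : 1 ≤ ((d - k₀).toNat : ℤ) := by omega
    nlinarith
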